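/- If ρ₁ > 0, ρ₂ > 0, p(u₁) < ε, p(u₂) > ε, and t = (p(u₁) - ε)/(p(u₁) - p(u₂)), then the adjusted state u₁* = (1-t)·u₁ + t·u₂ satisfies p(u₁*) ≥ ε. -/

import Mathlib

/-- With the robust scaling parameter `t = (p(u₁) - ε)/(p(u₁) - p(u₂))`, the adjusted
state has pressure at least `ε`. -/
theorem robust_scaling_adjustment
    (γ ε : ℝ) (hγ : 1 < γ) (hε : 0 < ε)
    (ρ₁ m₁ E₁ ρ₂ m₂ E₂ : ℝ) (hρ₁ : 0 < ρ₁) (hρ₂ : 0 < ρ₂)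
    (hp₁ : (γ - 1) * (E₁ - m₁ ^ 2 / (2 * ρ₁)) < ε)
    (hp₂ : ε < (γ - 1) * (E₂ - m₂ ^ 2 / (2 * ρ₂)))
    (t : ℝ)
    (ht : t = ((γ - 1) * (E₁ - m₁ ^ 2 / (2 * ρ₁)) - ε)
        / ((γ - 1) * (E₁ - m₁ ^ 2 / (2 * ρ₁)) - (γ - 1) * (E₂ - m₂ ^ 2 / (2 * ρ₂)))) :
    ε ≤ (γ - 1) * (((1 - t) * E₁ + t * E₂)
        - ((1 - t) * m₁ + t * m₂) ^ 2 / (2 * ((1 - t) * ρ₁ + t * ρ₂))) := by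
  have hγ' : 0 < γ - 1 := by linarith
  set p₁ := (γ - 1) * (E₁ - m₁ ^ 2 / (2 * ρ₁)) with hP1
  set p₂ := (γ - 1) * (E₂ - m₂ ^ 2 / (2 * ρ₂)) with hP2
  have hden : p₁ - p₂ < 0 := by linarith
  have ht0 : 0 < t := by
    rw [ht]
    exact div_pos_of_neg_of_neg (by linarith) hden
  have ht1 : t < 1 := by
    rw [ht, div_lt_one_of_neg hden]
    linarith
  -- the interpolation identity: (1-t) p₁ + t p₂ = ε
  have hne : p₁ - p₂ ≠ 0 := ne_of_lt hden
  have hid : (1 - t) * p₁ + t * p₂ = ε := by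
    rw [ht]
    field_simp
    ring
  have hρ : 0 < (1 - t) * ρ₁ + t * ρ₂ := by
    have := mul_pos (by linarith : (0:ℝ) < 1 - t) hρ₁
    have := mul_pos ht0 hρ₂
    linarith
  -- convexity of m²/(2ρ)
  have key : ((1 - t) * m₁ + t * m₂) ^ 2 / (2 * ((1 - t) * ρ₁ + t * ρ₂))
      ≤ (1 - t) * (m₁ ^ 2 / (2 * ρ₁)) + t * (m₂ ^ 2 / (2 * ρ₂)) := by
    rw [div_le_iff₀ (by linarith)]
    have h1 : (0:ℝ) < 1 - t := by linarith
    have hs := sq_nonneg (m₁ * ρ₂ - m₂ * ρ₁)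
    have h2 := mul_nonneg (mul_nonneg (le_of_lt ht0) h1.le) hs
    field_simp
    nlinarith [mul_pos hρ₁ hρ₂, mul_pos ht0 h1, h2]
  have hq : (1 - t) * (E₁ - m₁ ^ 2 / (2 * ρ₁)) + t * (E₂ - m₂ ^ 2 / (2 * ρ₂))
      ≤ ((1 - t) * E₁ + t * E₂)
        - ((1 - t) * m₁ + t * m₂) ^ 2 / (2 * ((1 - t) * ρ₁ + t * ρ₂)) := by
    nlinarith [key]
  calc ε = (1 - t) * p₁ + t * p₂ := hid.symm
    _ = (γ - 1) * ((1 - t) * (E₁ - m₁ ^ 2 / (2 * ρ₁)) + t * (E₂ - m₂ ^ 2 / (2 * ρ₂))) := by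
        rw [hP1, hP2]; ring
    _ ≤ _ := by
        apply mul_le_mul_of_nonneg_left hq hγ'.le
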